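/- Fix T > 0, K > 0, r ∈ ℝ, σ > 0, α > 0, and a point (t, x) with 0 ≤ t < T and x > 0. For h > 0 define the Leland-adjusted volatility ν(h) = √(σ² + α/√h), and let Γ_{ν(h)}(t, x) = φ(d₁^{ν(h)}(t, x)) / (x · ν(h) · √(T − t)) denote the Black–Scholes gamma computed with volatility ν(h), where φ is the standard normal density. Then Γ_{ν(h)}(t, x) / √h → 0 as h → 0⁺; in particular Γ_{ν(h)}(t, x) = O(√h) as the time step h tends to zero. -/

import Mathlib

open Filter

/-- The Black–Scholes quantity `d₁` for maturity `T`, strike `K`, rate `r`,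
volatility `ν`. -/
noncomputable def bsD1 (T K r ν t x : ℝ) : ℝ :=
  (Real.log (x / K) + (r + ν ^ 2 / 2) * (T - t)) / (ν * Real.sqrt (T - t))

/-- The Black–Scholes gamma `Γ_ν(t, x) = φ(d₁(t, x)) / (x ν √(T - t))`, where
`φ(u) = e^{-u²/2}/√(2π)` is the standard normal density. -/
noncomputable def bsGamma (T K r ν t x : ℝ) : ℝ :=
  Real.exp (-(bsD1 T K r ν t x) ^ 2 / 2) / Real.sqrt (2 * Real.pi) /
    (x * ν * Real.sqrt (T - t))

set_option maxHeartbeats 1000000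
/-- With the Leland-adjusted volatility `ν(h) = √(σ² + α/√h)`, the Black–Scholes gamma at a
fixed point `(t, x)` satisfies `Γ_{ν(h)}(t, x) / √h → 0` as the time step `h → 0⁺`; in
particular `Γ_{ν(h)}(t, x) = O(√h)`. -/
theorem leland_gamma_div_sqrt_tendsto_zero
    (T K r σ α t x : ℝ) (hT : 0 < T) (hK : 0 < K) (hσ : 0 < σ) (hα : 0 < α)
    (ht0 : 0 ≤ t) (htT : t < T) (hx : 0 < x) :
    Tendsto
      (fun h : ℝ =>
        bsGamma T K r (Real.sqrt (σ ^ 2 + α / Real.sqrt h)) t x / Real.sqrt h)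
      (nhdsWithin 0 (Set.Ioi 0)) (nhds 0) := by
  have hτ : (0:ℝ) < T - t := sub_pos.2 htT
  set y : ℝ := Real.sqrt (T - t) with hy
  have hy0 : 0 < y := Real.sqrt_pos.2 hτ
  have hy2 : y ^ 2 = T - t := Real.sq_sqrt hτ.le
  set A : ℝ := (Real.log (x / K) + r * (T - t)) / y with hA
  set B : ℝ := y / 2 with hB
  have hB0 : 0 < B := by positivity
  set c : ℝ := B ^ 2 * α / 2 with hc
  have hc0 : 0 < c := by positivity
  have h2π : 0 < Real.sqrt (2 * Real.pi) := Real.sqrt_pos.2 (by positivity)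
  set Cst : ℝ := Real.exp (-(A * B)) / (Real.sqrt (2 * Real.pi) * (x * y)) with hCst
  have hgtendsto : Tendsto (fun h : ℝ =>
      Cst * (Real.exp (-(c * (Real.sqrt h)⁻¹)) / Real.sqrt (α * Real.sqrt h)))
      (nhdsWithin 0 (Set.Ioi 0)) (nhds 0) := by
    have hsqrt : Tendsto Real.sqrt (nhdsWithin 0 (Set.Ioi 0)) (nhdsWithin 0 (Set.Ioi 0)) := by
      apply tendsto_nhdsWithin_of_tendsto_nhds_of_eventually_within
      · simpa using ((Real.continuous_sqrt.tendsto 0).mono_left nhdsWithin_le_nhds)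
      · filter_upwards [self_mem_nhdsWithin] with h hh
        exact Real.sqrt_pos.2 hh
    have hinv : Tendsto (fun h : ℝ => (Real.sqrt h)⁻¹) (nhdsWithin 0 (Set.Ioi 0)) atTop :=
      tendsto_inv_nhdsGT_zero.comp hsqrt
    have hmain : Tendsto (fun u : ℝ => Real.sqrt u * Real.exp (-(c * u)) / Real.sqrt α)
        atTop (nhds 0) := by
      have h0 : Tendsto (fun u : ℝ => u ^ ((1:ℝ)/2) * Real.exp (-c * u)) atTop (nhds 0) :=
        tendsto_rpow_mul_exp_neg_mul_atTop_nhds_zero _ c hc0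
      have h1 : Tendsto (fun u : ℝ => Real.sqrt u * Real.exp (-(c * u))) atTop (nhds 0) := by
        refine h0.congr' ?_
        filter_upwards [eventually_ge_atTop (0:ℝ)] with u hu
        rw [Real.sqrt_eq_rpow, neg_mul]
      simpa using h1.div_const (Real.sqrt α)
    have hcomp := hmain.comp hinv
    have hmid : Tendsto (fun h : ℝ =>
        Real.exp (-(c * (Real.sqrt h)⁻¹)) / Real.sqrt (α * Real.sqrt h))
        (nhdsWithin 0 (Set.Ioi 0)) (nhds 0) := by
      refine hcomp.congr' ?_
      filter_upwards [self_mem_nhdsWithin] with h hh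
      have hs : 0 < Real.sqrt h := Real.sqrt_pos.2 hh
      simp only [Function.comp]
      rw [Real.sqrt_mul hα.le, Real.sqrt_inv]
      field_simp
    have h2 := hmid.const_mul Cst
    rw [mul_zero] at h2
    exact h2
  refine squeeze_zero' ?_ ?_ hgtendsto
  · filter_upwards [self_mem_nhdsWithin] with h hh
    have hs : 0 < Real.sqrt h := Real.sqrt_pos.2 hh
    unfold bsGamma
    positivity
  · filter_upwards [self_mem_nhdsWithin] with h hh
    have hh0 : (0:ℝ) < h := hh
    have hs : 0 < Real.sqrt h := Real.sqrt_pos.2 hh0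
    have hsh : Real.sqrt h * Real.sqrt h = h := Real.mul_self_sqrt hh0.le
    set ν : ℝ := Real.sqrt (σ ^ 2 + α / Real.sqrt h) with hνdef
    have hν2 : ν ^ 2 = σ ^ 2 + α / Real.sqrt h := Real.sq_sqrt (by positivity)
    have hνpos : 0 < ν := Real.sqrt_pos.2 (by positivity)
    have hd1 : bsD1 T K r ν t x = A / ν + B * ν := by
      rw [bsD1, hA, hB, ← hy2, Real.sqrt_sq hy0.le]
      field_simp
      ring
    clear_value ν
    clear_value y A B c Cst
    clear hνdef
    have hd1sq : 2 * (A * B) + B ^ 2 * ν ^ 2 ≤ (bsD1 T K r ν t x) ^ 2 := by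
      rw [hd1]
      have h1 : A / ν * ν = A := div_mul_cancel₀ A hνpos.ne'
      nlinarith [sq_nonneg (A / ν)]
    have hνlb : α / Real.sqrt h ≤ ν ^ 2 := by nlinarith [sq_nonneg σ]
    have hnum : Real.exp (-(bsD1 T K r ν t x) ^ 2 / 2)
        ≤ Real.exp (-(A * B)) * Real.exp (-(c * (Real.sqrt h)⁻¹)) := by
      rw [← Real.exp_add]
      apply Real.exp_le_exp.2
      have hceq : c * (Real.sqrt h)⁻¹ = B ^ 2 * (α / Real.sqrt h) / 2 := by
        rw [hc]; ring
      rw [hceq]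
      nlinarith [hd1sq, hνlb, sq_nonneg B]
    have hmul : α / Real.sqrt h * h = α * Real.sqrt h := by
      rw [div_mul_eq_mul_div, ← hsh]
      field_simp
      rw [Real.sqrt_sq hs.le]
    have hden : Real.sqrt (2 * Real.pi) * (x * y) * Real.sqrt (α * Real.sqrt h)
        ≤ Real.sqrt (2 * Real.pi) * (x * ν * y) * Real.sqrt h := by
      have hνs : Real.sqrt (α * Real.sqrt h) ≤ ν * Real.sqrt h := by
        have hrw : ν * Real.sqrt h = Real.sqrt (ν ^ 2 * h) := by
          rw [Real.sqrt_mul (by positivity), Real.sqrt_sq hνpos.le]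
        rw [hrw]
        apply Real.sqrt_le_sqrt
        have hνh : ν ^ 2 * h = σ ^ 2 * h + α * Real.sqrt h := by
          rw [hν2, add_mul, hmul]
        nlinarith [mul_nonneg (sq_nonneg σ) hh0.le]
      calc Real.sqrt (2 * Real.pi) * (x * y) * Real.sqrt (α * Real.sqrt h)
          ≤ Real.sqrt (2 * Real.pi) * (x * y) * (ν * Real.sqrt h) :=
            mul_le_mul_of_nonneg_left hνs (by positivity)
        _ = Real.sqrt (2 * Real.pi) * (x * ν * y) * Real.sqrt h := by ring
    have hfg : bsGamma T K r ν t x / Real.sqrt h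
        = Real.exp (-(bsD1 T K r ν t x) ^ 2 / 2)
          / (Real.sqrt (2 * Real.pi) * (x * ν * y) * Real.sqrt h) := by
      rw [bsGamma, ← hy, div_div, div_div]
      ring
    have hgform : Cst * (Real.exp (-(c * (Real.sqrt h)⁻¹)) / Real.sqrt (α * Real.sqrt h))
        = (Real.exp (-(A * B)) * Real.exp (-(c * (Real.sqrt h)⁻¹)))
          / (Real.sqrt (2 * Real.pi) * (x * y) * Real.sqrt (α * Real.sqrt h)) := by
      rw [hCst, div_mul_div_comm, mul_assoc]
    rw [hfg, hgform]
    exact div_le_div₀ (by positivity) hnum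
      (mul_pos (mul_pos h2π (mul_pos hx hy0)) (Real.sqrt_pos.2 (by positivity))) hden
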